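/- The Ramsey ideal R, regarded as a subset of the Polish space P([ω]²) ≅ 2^{[ω]²}, is Π¹₁-complete: its complement is analytic, and for every Polish space Y and every coanalytic set B ⊆ Y there is a Borel measurable function f : Y → P([ω]²) with f⁻¹(R) = B. -/

import Mathlib

open MeasureTheory

/-- The set `[ω]²` of two-element subsets of `ω`. -/
abbrev TwoElt : Type := {s : Finset ℕ // s.card = 2}

/-- The Ramsey ideal: all `A ⊆ [ω]²` such that there is no infinite `B ⊆ ω`
with `[B]² ⊆ A`, viewed inside the Cantor space `2^{[ω]²} ≅ P([ω]²)`. -/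
def ramseyIdeal : Set (TwoElt → Bool) :=
  {x | ¬ ∃ B : Set ℕ, B.Infinite ∧ ∀ s : TwoElt, ↑s.1 ⊆ B → x s = true}

/-! ### Auxiliary: coding finite sequences by natural numbers -/

namespace RamseyAux

/-- An injective coding of lists of naturals which is strictly monotone along
proper prefixes. -/
def code : List ℕ → ℕ
  | [] => 0
  | n :: t => Nat.pair n (code t) + 1

theorem code_injective : ∀ u v : List ℕ, code u = code v → u = v
  | [], [], _ => rfl
  | [], _ :: _, h => by simp [code] at h
  | _ :: _, [], h => by simp [code] at h
  | a :: t, b :: s, h => by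
    simp only [code, Nat.add_right_cancel_iff, Nat.pair_eq_pair] at h
    rw [h.1, code_injective t s h.2]

theorem code_lt_of_prefix : ∀ {u v : List ℕ}, u <+: v → u ≠ v → code u < code v
  | [], [], _, hne => absurd rfl hne
  | [], _ :: _, _, _ => by simp [code]
  | a :: t, [], hp, _ => by simp at hp
  | a :: t, b :: s, hp, hne => by
    rw [List.cons_prefix_cons] at hp
    obtain ⟨rfl, hts⟩ := hp
    have hne' : t ≠ s := fun h => hne (by rw [h])
    simpa [code] using Nat.pair_lt_pair_right a (code_lt_of_prefix hts hne')

/-- The cylinder determined by a finite sequence. -/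
def cyl (u : List ℕ) : Set (ℕ → ℕ) :=
  PiNat.cylinder (fun i => u.getD i 0) u.length

theorem mem_cyl {x : ℕ → ℕ} {u : List ℕ} :
    x ∈ cyl u ↔ ∀ i < u.length, x i = u.getD i 0 := Iff.rfl

theorem prefix_getD {u v : List ℕ} (h : u <+: v) {i : ℕ} (hi : i < u.length) :
    u.getD i 0 = v.getD i 0 := by
  rw [List.getD_eq_getElem _ _ hi,
    List.getD_eq_getElem _ _ (lt_of_lt_of_le hi h.length_le)]
  exact h.getElem hi

/-- The initial segment of length `k` of an infinite sequence. -/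
def pre (a : ℕ → ℕ) (k : ℕ) : List ℕ := (List.range k).map a

@[simp] theorem pre_length (a : ℕ → ℕ) (k : ℕ) : (pre a k).length = k := by
  simp [pre]

theorem pre_getD (a : ℕ → ℕ) {i k : ℕ} (h : i < k) : (pre a k).getD i 0 = a i := by
  rw [List.getD_eq_getElem _ _ (by simpa using h)]
  simp [pre]

theorem pre_prefix (a : ℕ → ℕ) {j k : ℕ} (h : j ≤ k) : pre a j <+: pre a k := by
  have : pre a j = (pre a k).take j := by
    rw [pre, pre, ← List.map_take, List.take_range, min_eq_left h]
  rw [this]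
  exact List.take_prefix _ _

theorem pre_ne (a : ℕ → ℕ) {j k : ℕ} (h : j ≠ k) : pre a j ≠ pre a k := fun he => by
  have := congrArg List.length he
  simp at this
  exact h this

theorem mem_cyl_pre (a : ℕ → ℕ) (k : ℕ) : a ∈ cyl (pre a k) := by
  intro i hi
  rw [pre_length] at hi
  exact (pre_getD a hi).symm

theorem pair_eq_of_lt {a b m n : ℕ} (hab : a < b) (hmn : m < n)
    (h : ({m, n} : Finset ℕ) = {a, b}) : m = a ∧ n = b := by
  have hm : m = a ∨ m = b := by
    have : m ∈ ({a, b} : Finset ℕ) := h ▸ (by simp)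
    simpa using this
  have hn : n = a ∨ n = b := by
    have : n ∈ ({a, b} : Finset ℕ) := h ▸ (by simp)
    simpa using this
  have hb : b = m ∨ b = n := by
    have : b ∈ ({m, n} : Finset ℕ) := by rw [h]; simp
    simpa using this
  rcases hm with rfl | rfl <;> rcases hn with h1 | h1 <;> omega

section Red

variable {Y : Type} [TopologicalSpace Y]

/-- The pair-coloring condition used in the reduction. -/
def goodPair (g : (ℕ → ℕ) → Y) (y : Y) (s : TwoElt) : Prop :=
  ∃ u v : List ℕ, u <+: v ∧ u ≠ v ∧ (s.1 : Finset ℕ) = {code u, code v} ∧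
    y ∈ closure (g '' cyl u) ∧ y ∈ closure (g '' cyl v)

theorem measurableSet_goodPair [MeasurableSpace Y] [OpensMeasurableSpace Y]
    (g : (ℕ → ℕ) → Y) (s : TwoElt) : MeasurableSet {y : Y | goodPair g y s} := by
  have : {y : Y | goodPair g y s} =
      ⋃ (u : List ℕ) (v : List ℕ)
        (_ : u <+: v ∧ u ≠ v ∧ (s.1 : Finset ℕ) = {code u, code v}),
        (closure (g '' cyl u) ∩ closure (g '' cyl v)) := by
    ext y
    simp only [Set.mem_setOf_eq, Set.mem_iUnion, Set.mem_inter_iff, goodPair]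
    constructor
    · rintro ⟨u, v, h1, h2, h3, h4, h5⟩; exact ⟨u, v, ⟨h1, h2, h3⟩, h4, h5⟩
    · rintro ⟨u, v, ⟨h1, h2, h3⟩, h4, h5⟩; exact ⟨u, v, h1, h2, h3, h4, h5⟩
  rw [this]
  exact MeasurableSet.iUnion fun u => MeasurableSet.iUnion fun v =>
    MeasurableSet.iUnion fun _ =>
      (isClosed_closure.measurableSet).inter (isClosed_closure.measurableSet)

theorem branch_to_homog (g : (ℕ → ℕ) → Y) (a : ℕ → ℕ) (y : Y) (hy : g a = y) :
    ∃ Bs : Set ℕ, Bs.Infinite ∧ ∀ s : TwoElt, ↑s.1 ⊆ Bs → goodPair g y s := by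
  have hmono : StrictMono fun k => code (pre a k) := by
    intro j k h
    exact code_lt_of_prefix (pre_prefix a h.le) (pre_ne a h.ne)
  refine ⟨Set.range fun k => code (pre a k),
    Set.infinite_range_of_injective hmono.injective, ?_⟩
  intro s hs
  obtain ⟨m, n, hmn, hset⟩ := Finset.card_eq_two.1 s.2
  have hmB : m ∈ Set.range fun k => code (pre a k) := by
    apply hs; rw [hset]; simp
  have hnB : n ∈ Set.range fun k => code (pre a k) := by
    apply hs; rw [hset]; simp
  obtain ⟨j, hj⟩ := hmB
  obtain ⟨k, hk⟩ := hnB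
  have key : ∀ j k : ℕ, j < k →
      (s.1 : Finset ℕ) = {code (pre a j), code (pre a k)} → goodPair g y s := by
    intro j k hjk hs1
    refine ⟨pre a j, pre a k, pre_prefix a hjk.le, pre_ne a hjk.ne, hs1, ?_, ?_⟩
    · exact subset_closure ⟨a, mem_cyl_pre a j, hy⟩
    · exact subset_closure ⟨a, mem_cyl_pre a k, hy⟩
  have hjk : j ≠ k := fun h => hmn (by rw [← hj, ← hk, h])
  rcases lt_or_gt_of_ne hjk with h | h
  · exact key j k h (by rw [hset, ← hj, ← hk])
  · exact key k j h (by rw [hset, ← hj, ← hk, Finset.pair_comm])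

theorem eq_of_mem_closure_cylinders [T2Space Y] {g : (ℕ → ℕ) → Y} (hg : Continuous g)
    {a : ℕ → ℕ} {y : Y} (h : ∀ k, y ∈ closure (g '' PiNat.cylinder a k)) : y = g a := by
  by_contra hne
  obtain ⟨W, U, hW, hU, hyW, haU, hdisj⟩ := t2_separation hne
  have hmem : g ⁻¹' U ∈ nhds a := hg.continuousAt.preimage_mem_nhds (hU.mem_nhds haU)
  obtain ⟨O, hOsub, hOopen, haO⟩ := mem_nhds_iff.1 hmem
  obtain ⟨V, ⟨x, n, rfl⟩, haV, hVsub⟩ :=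
    (PiNat.isTopologicalBasis_cylinders (fun _ : ℕ => ℕ)).exists_subset_of_mem_open haO hOopen
  have hcyl : PiNat.cylinder a n = PiNat.cylinder x n := PiNat.mem_cylinder_iff_eq.1 haV
  have hsub : g '' PiNat.cylinder a n ⊆ U := by
    rw [hcyl]
    exact (Set.image_subset_iff.2 (hVsub.trans hOsub))
  have hyU : y ∈ closure U := closure_mono hsub (h n)
  have : closure U ⊆ Wᶜ := closure_minimal (fun z hz hzW => by
    exact Set.disjoint_left.1 hdisj hzW hz) (isClosed_compl_iff.2 hW)
  exact this hyU hyW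

theorem homog_to_branch [T2Space Y] {g : (ℕ → ℕ) → Y} (hg : Continuous g) (y : Y)
    (Bs : Set ℕ) (hinf : Bs.Infinite)
    (hhom : ∀ s : TwoElt, ↑s.1 ⊆ Bs → goodPair g y s) : ∃ a, g a = y := by
  classical
  have pairwit : ∀ m ∈ Bs, ∀ n ∈ Bs, m < n →
      ∃ u v : List ℕ, u <+: v ∧ u ≠ v ∧ code u = m ∧ code v = n ∧
        y ∈ closure (g '' cyl u) ∧ y ∈ closure (g '' cyl v) := by
    intro m hm n hn hmn
    have hcard : ({m, n} : Finset ℕ).card = 2 := Finset.card_pair hmn.ne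
    have hsubset : ↑({m, n} : Finset ℕ) ⊆ Bs := by
      simp only [Finset.coe_insert, Finset.coe_singleton]
      exact Set.insert_subset_iff.2 ⟨hm, Set.singleton_subset_iff.2 hn⟩
    obtain ⟨u, v, huv, hne, hpair, hu, hv⟩ := hhom ⟨{m, n}, hcard⟩ hsubset
    have hlt : code u < code v := code_lt_of_prefix huv hne
    obtain ⟨h1, h2⟩ := pair_eq_of_lt hlt hmn hpair
    exact ⟨u, v, huv, hne, h1.symm, h2.symm, hu, hv⟩
  have H : ∀ m ∈ Bs, ∃ u : List ℕ, code u = m ∧ y ∈ closure (g '' cyl u) := by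
    intro m hm
    obtain ⟨n, hn, hmn⟩ := hinf.exists_gt m
    obtain ⟨u, v, _, _, hcu, _, hu, _⟩ := pairwit m hm n hn hmn
    exact ⟨u, hcu, hu⟩
  set node : ℕ → List ℕ := fun m =>
    if h : ∃ u : List ℕ, code u = m ∧ y ∈ closure (g '' cyl u) then h.choose else []
    with hnode_def
  have hnode : ∀ m ∈ Bs, code (node m) = m ∧ y ∈ closure (g '' cyl (node m)) := by
    intro m hm
    rw [hnode_def]
    simp only [dif_pos (H m hm)]
    exact (H m hm).choose_spec
  have nodeUniq : ∀ m ∈ Bs, ∀ u : List ℕ, code u = m → u = node m := by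
    intro m hm u hu
    exact code_injective _ _ (by rw [hu, (hnode m hm).1])
  have chain : ∀ m ∈ Bs, ∀ n ∈ Bs, m < n → node m <+: node n ∧ node m ≠ node n := by
    intro m hm n hn hmn
    obtain ⟨u, v, huv, hne, hcu, hcv, _, _⟩ := pairwit m hm n hn hmn
    rw [nodeUniq m hm u hcu, nodeUniq n hn v hcv] at huv hne
    exact ⟨huv, hne⟩
  have Lk : ∀ k : ℕ, ∃ m, m ∈ Bs ∧ k ≤ (node m).length := by
    intro k
    induction k with
    | zero =>
      obtain ⟨m, hm⟩ := hinf.nonempty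
      exact ⟨m, hm, Nat.zero_le _⟩
    | succ k ih =>
      obtain ⟨m, hm, hk⟩ := ih
      obtain ⟨n, hn, hmn⟩ := hinf.exists_gt m
      obtain ⟨hp, hne⟩ := chain m hm n hn hmn
      have hlen : (node m).length < (node n).length :=
        lt_of_le_of_ne hp.length_le (fun h => hne (hp.eq_of_length h))
      exact ⟨n, hn, by omega⟩
  set μ : ℕ → ℕ := fun i => (Lk (i + 1)).choose with hμ_def
  have hμ : ∀ i : ℕ, μ i ∈ Bs ∧ i + 1 ≤ (node (μ i)).length := fun i =>
    (Lk (i + 1)).choose_spec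
  set a : ℕ → ℕ := fun i => (node (μ i)).getD i 0 with ha_def
  have agree : ∀ m ∈ Bs, ∀ i, i < (node m).length → a i = (node m).getD i 0 := by
    intro m hm i hi
    rcases lt_trichotomy (μ i) m with h | h | h
    · exact prefix_getD (chain _ (hμ i).1 _ hm h).1 (by have := (hμ i).2; omega)
    · show (node (μ i)).getD i 0 = (node m).getD i 0
      rw [h]
    · exact (prefix_getD (chain m hm _ (hμ i).1 h).1 hi).symm
  have key : ∀ k, y ∈ closure (g '' PiNat.cylinder a k) := by
    intro k
    obtain ⟨m, hm, hk⟩ := Lk k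
    have hsub : cyl (node m) ⊆ PiNat.cylinder a k := by
      intro x hx i hik
      have hi : i < (node m).length := lt_of_lt_of_le hik hk
      exact (hx i hi).trans (agree m hm i hi).symm
    exact closure_mono (Set.image_mono hsub) (hnode m hm).2
  exact ⟨a, (eq_of_mem_closure_cylinders hg key).symm⟩

end Red

/-- Any infinite subset of `ℕ` has two distinct elements, so the constant `false`
function belongs to the Ramsey ideal. -/
theorem const_false_mem : (fun _ : TwoElt => false) ∈ ramseyIdeal := by
  rintro ⟨Bs, hinf, hhom⟩
  obtain ⟨m, hm, n, hn, hmn⟩ := hinf.nontrivial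
  have hsubset : ↑({m, n} : Finset ℕ) ⊆ Bs := by
    simp only [Finset.coe_insert, Finset.coe_singleton]
    exact Set.insert_subset_iff.2 ⟨hm, Set.singleton_subset_iff.2 hn⟩
  simpa using hhom ⟨{m, n}, Finset.card_pair hmn⟩ hsubset

theorem infinite_iff_unbounded (s : Set ℕ) : s.Infinite ↔ ∀ N, ∃ n ∈ s, N ≤ n := by
  constructor
  · intro h N
    obtain ⟨n, hn, hlt⟩ := h.exists_gt N
    exact ⟨n, hn, hlt.le⟩
  · intro h
    by_contra hfin
    rw [Set.not_infinite] at hfin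
    obtain ⟨N, hN⟩ := hfin.bddAbove
    obtain ⟨n, hn, hle⟩ := h (N + 1)
    have := hN hn
    omega

end RamseyAux

open RamseyAux in
/-- The Ramsey ideal is `Π¹₁`-complete: its complement is analytic, and every
coanalytic subset of every Polish space Borel-reduces to it. -/
theorem ramseyIdeal_coanalytic_complete :
    AnalyticSet ramseyIdealᶜ ∧
      ∀ (Y : Type) [TopologicalSpace Y] [PolishSpace Y]
        [MeasurableSpace Y] [BorelSpace Y] (B : Set Y),
        AnalyticSet Bᶜ →
          ∃ f : Y → (TwoElt → Bool), Measurable f ∧ f ⁻¹' ramseyIdeal = B := by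
  classical
  constructor
  · -- the complement of the Ramsey ideal is analytic
    set S : Set ((ℕ → Bool) × (TwoElt → Bool)) :=
      {p | (∀ N, ∃ n, N ≤ n ∧ p.1 n = true) ∧
        ∀ s : TwoElt, (∀ n ∈ s.1, p.1 n = true) → p.2 s = true} with hS_def
    have hSmeas : MeasurableSet S := by
      have h1 : MeasurableSet {p : (ℕ → Bool) × (TwoElt → Bool) |
          ∀ N, ∃ n, N ≤ n ∧ p.1 n = true} := by
        have : {p : (ℕ → Bool) × (TwoElt → Bool) | ∀ N, ∃ n, N ≤ n ∧ p.1 n = true} =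
            ⋂ (N : ℕ), ⋃ (n : ℕ) (_ : N ≤ n), (fun p : (ℕ → Bool) × (TwoElt → Bool) => p.1 n) ⁻¹' {true} := by
          ext p; simp
        rw [this]
        refine MeasurableSet.iInter fun N => MeasurableSet.iUnion fun n =>
          MeasurableSet.iUnion fun _ => ?_
        exact ((measurable_pi_apply n).comp measurable_fst) (measurableSet_singleton true)
      have h2 : MeasurableSet {p : (ℕ → Bool) × (TwoElt → Bool) |
          ∀ s : TwoElt, (∀ n ∈ s.1, p.1 n = true) → p.2 s = true} := by
        have : {p : (ℕ → Bool) × (TwoElt → Bool) |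
            ∀ s : TwoElt, (∀ n ∈ s.1, p.1 n = true) → p.2 s = true} =
            ⋂ (s : TwoElt),
              ((⋂ (n : ℕ) (_ : n ∈ s.1), {p : (ℕ → Bool) × (TwoElt → Bool) | p.1 n = true})ᶜ
                ∪ (fun p : (ℕ → Bool) × (TwoElt → Bool) => p.2 s) ⁻¹' {true}) := by
          ext p
          simp only [Set.mem_setOf_eq, Set.mem_iInter, Set.mem_union, Set.mem_compl_iff]
          constructor
          · intro h s
            by_cases hc : ∀ n ∈ s.1, p.1 n = true
            · exact Or.inr (h s hc)
            · exact Or.inl (by simpa using hc)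
          · intro h s hc
            rcases h s with h' | h'
            · exact absurd (by simpa using hc) h'
            · exact h'
        rw [this]
        refine MeasurableSet.iInter fun s => MeasurableSet.union ?_ ?_
        · refine (MeasurableSet.iInter fun n => MeasurableSet.iInter fun _ => ?_).compl
          show MeasurableSet
            ((fun p : (ℕ → Bool) × (TwoElt → Bool) => p.1 n) ⁻¹' {true})
          exact ((measurable_pi_apply n).comp measurable_fst) (measurableSet_singleton true)
        · exact ((measurable_pi_apply s).comp measurable_snd) (measurableSet_singleton true)
      exact h1.inter h2
    have himg : ramseyIdealᶜ = Prod.snd '' S := by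
      ext x
      simp only [Set.mem_compl_iff, ramseyIdeal, Set.mem_setOf_eq, not_not, Set.mem_image]
      constructor
      · rintro ⟨Bs, hinf, hhom⟩
        refine ⟨⟨fun n => decide (n ∈ Bs), x⟩, ⟨?_, ?_⟩, rfl⟩
        · intro N
          obtain ⟨n, hn, hle⟩ := (infinite_iff_unbounded Bs).1 hinf N
          exact ⟨n, hle, by simpa using hn⟩
        · intro s hc
          refine hhom s fun n hn => ?_
          simpa using hc n hn
      · rintro ⟨⟨b, x'⟩, ⟨hb, hhom⟩, rfl⟩
        refine ⟨{n | b n = true}, ?_, ?_⟩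
        · rw [infinite_iff_unbounded]
          intro N
          obtain ⟨n, hle, hbn⟩ := hb N
          exact ⟨n, hbn, hle⟩
        · intro s hs
          exact hhom s fun n hn => hs hn
    rw [himg]
    exact hSmeas.analyticSet_image measurable_snd
  · -- the reduction
    intro Y _ _ _ _ B hB
    rw [AnalyticSet_def] at hB
    rcases hB with hB | ⟨g, hg, hrange⟩
    · refine ⟨fun _ _ => false, measurable_const, ?_⟩
      have hBuniv : B = Set.univ := by
        rw [← compl_compl B, hB, Set.compl_empty]
      rw [hBuniv]
      ext y
      simp only [Set.mem_preimage, Set.mem_univ, iff_true]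
      exact const_false_mem
    · refine ⟨fun y s => if goodPair g y s then true else false, ?_, ?_⟩
      · refine measurable_pi_lambda _ fun s => ?_
        exact Measurable.ite (measurableSet_goodPair g s) measurable_const measurable_const
      · ext y
        have hf : ∀ s : TwoElt, (if goodPair g y s then true else false) = true ↔
            goodPair g y s := fun s => by by_cases h : goodPair g y s <;> simp [h]
        simp only [Set.mem_preimage, ramseyIdeal, Set.mem_setOf_eq]
        constructor
        · intro h
          by_contra hyB
          have hyc : y ∈ Set.range g := by rw [hrange]; exact hyB
          obtain ⟨a, ha⟩ := hyc
          obtain ⟨Bs, hinf, hhom⟩ := branch_to_homog g a y ha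
          exact h ⟨Bs, hinf, fun s hs => (hf s).2 (hhom s hs)⟩
        · intro hyB
          rintro ⟨Bs, hinf, hhom⟩
          obtain ⟨a, ha⟩ :=
            homog_to_branch hg y Bs hinf fun s hs => (hf s).1 (hhom s hs)
          have hyc : y ∈ Bᶜ := by rw [← hrange]; exact ⟨a, ha⟩
          exact hyc hyB
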